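/- Let C be a choice function on the integer box B satisfying (A1), (A2), (A3). Let z ∈ B be acceptable (C(z) = z) and let e ∈ E satisfy z(e) < b(e). Then the following are equivalent: (i) e is interesting under z; (ii) there is an acceptable z̃ ∈ B with z̃ ≻ z and z̃(e) > z(e); (iii) C(z + 1^e) ≠ z; (iv) C(z + 1^e) equals either z + 1^e, or z + 1^e − 1^{e'} for some e' ∈ E − {e}. -/
import Mathlib


namespace SGMMStmt

variable {E : Type*} [Fintype E] [DecidableEq E]

/-- Membership in the integer box `B = {z : E → ℕ | z e ≤ b e for all e}`. -/
def inBox (b z : E → ℕ) : Prop := ∀ e, z e ≤ b e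

/-- `e` is interesting under `z`: some increase of `z` only at `e` (staying in the box)
is partly retained by the choice function at `e`. -/
def Interesting (b : E → ℕ) (C : (E → ℕ) → (E → ℕ)) (z : E → ℕ) (e : E) : Prop :=
  ∃ z', inBox b z' ∧ z e < z' e ∧ (∀ e', e' ≠ e → z' e' = z e') ∧ z e < C z' e

/-- Lemma 3.1: for an acceptable `z` and an unsaturated `e`, the four conditions
(interesting; a revealed-preferred acceptable improvement at `e`; `C (z + 1^e) ≠ z`;
the two-case description of `C (z + 1^e)`) are equivalent. -/
theorem statement1 (b : E → ℕ) (C : (E → ℕ) → (E → ℕ))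
    (hC : ∀ z, inBox b z → C z ≤ z)
    (hA1 : ∀ z z' : E → ℕ, inBox b z → z' ≤ z → C z ≤ z' → C z' = C z)
    (hA2 : ∀ z z' : E → ℕ, inBox b z → z' ≤ z → C z ⊓ z' ≤ C z')
    (hA3 : ∀ z z' : E → ℕ, inBox b z → z' ≤ z → ∑ e, C z' e ≤ ∑ e, C z e)
    (z : E → ℕ) (hz : inBox b z) (hacc : C z = z) (e : E) (he : z e < b e) :
    [ Interesting b C z e,
      ∃ zt, inBox b zt ∧ C zt = zt ∧ C (zt ⊔ z) = zt ∧ z e < zt e,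
      C (z + Pi.single e 1) ≠ z,
      C (z + Pi.single e 1) = z + Pi.single e 1 ∨
        ∃ e', e' ≠ e ∧ C (z + Pi.single e 1) + Pi.single e' 1 = z + Pi.single e 1 ].TFAE := by

  set w := z + Pi.single e 1 with hw
  have hwe : w e = z e + 1 := by simp [hw]
  have hwne : ∀ x, x ≠ e → w x = z x := by
    intro x hx; simp [hw, Pi.single_eq_of_ne hx]
  have hwBox : inBox b w := by
    intro x
    by_cases hx : x = e
    · subst hx; rw [hwe]; exact he
    · rw [hwne x hx]; exact hz x
  have hzw : z ≤ w := by
    intro x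
    rw [hw]
    exact Nat.le_add_right _ _
  tfae_have 1 → 2
  | ⟨z', hz'box, hlt, hagree, hCe⟩ => by
    have hzz' : z ≤ z' := by
      intro x
      by_cases hx : x = e
      · subst hx; exact hlt.le
      · rw [hagree x hx]
    have hCle : C z' ≤ z' := hC z' hz'box
    refine ⟨C z', fun x => (hCle x).trans (hz'box x), ?_, ?_, hCe⟩
    · exact hA1 z' (C z') hz'box hCle le_rfl
    · exact hA1 z' (C z' ⊔ z) hz'box (sup_le hCle hzz') le_sup_left
  tfae_have 2 → 3
  | ⟨zt, htbox, htacc, htsup, hte⟩ => by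
    intro hcon
    have hsupBox : inBox b (zt ⊔ z) := fun x => max_le (htbox x) (hz x)
    have hwle : w ≤ zt ⊔ z := by
      intro x
      by_cases hx : x = e
      · subst hx; rw [hwe]; exact le_max_of_le_left hte
      · rw [hwne x hx]; exact le_max_right _ _
    have := hA2 (zt ⊔ z) w hsupBox hwle
    rw [htsup, hcon] at this
    have h2 := this e
    simp only [Pi.inf_apply, hwe] at h2
    omega
  tfae_have 3 → 4
  | h3 => by
    have hCw := hC w hwBox
    have hsum : ∑ x, z x ≤ ∑ x, C w x := by
      have := hA3 w z hwBox hzw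
      rwa [hacc] at this
    have hsumw : ∑ x, w x = ∑ x, z x + 1 := by
      simp [hw, Finset.sum_add_distrib]
    by_cases hcw : C w = w
    · exact Or.inl hcw
    · right
      obtain ⟨e', he'⟩ := Function.ne_iff.mp hcw
      have hlt' : C w e' < w e' := lt_of_le_of_ne (hCw e') he'
      have hsplitC : ∑ x, C w x = C w e' + ∑ x ∈ Finset.univ.erase e', C w x :=
        (Finset.add_sum_erase _ _ (Finset.mem_univ e')).symm
      have hsplitw : ∑ x, w x = w e' + ∑ x ∈ Finset.univ.erase e', w x :=
        (Finset.add_sum_erase _ _ (Finset.mem_univ e')).symm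
      have hrest : ∑ x ∈ Finset.univ.erase e', C w x ≤ ∑ x ∈ Finset.univ.erase e', w x :=
        Finset.sum_le_sum fun x _ => hCw x
      have hresteq : ∑ x ∈ Finset.univ.erase e', w x = ∑ x ∈ Finset.univ.erase e', C w x := by
        omega
      have hpt : ∀ x ∈ Finset.univ.erase e', C w x = w x :=
        (Finset.sum_eq_sum_iff_of_le fun x _ => hCw x).mp hresteq.symm
      have hpt' : ∀ x, x ≠ e' → C w x = w x := fun x hx =>
        hpt x (Finset.mem_erase.mpr ⟨hx, Finset.mem_univ x⟩)
      have hCe' : C w e' + 1 = w e' := by omega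
      have hne : e' ≠ e := by
        intro hx
        subst hx
        apply h3
        funext x
        by_cases hx : x = e'
        · subst hx; rw [hwe] at hCe'; omega
        · rw [hpt' x hx, hwne x hx]
      refine ⟨e', hne, ?_⟩
      funext x
      simp only [Pi.add_apply]
      by_cases hx : x = e'
      · subst hx; rw [Pi.single_eq_same]; exact hCe'
      · rw [Pi.single_eq_of_ne hx, hpt' x hx, Nat.add_zero]
  tfae_have 4 → 1
  | h4 => by
    have hCwe : C w e = z e + 1 := by
      rcases h4 with h | ⟨e', hne, heq⟩
      · rw [h, hwe]
      · have := congrFun heq e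
        simp only [Pi.add_apply, Pi.single_eq_of_ne (Ne.symm hne)] at this
        rw [← hwe]; omega
    exact ⟨w, hwBox, by omega, hwne, by omega⟩
  tfae_finish


end SGMMStmt
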